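/- For all real numbers a, b > 0, defining c_k(a,b) := inf{T ≥ 0 : N(a,b;T) ≥ k+1} (the (k+1)-st smallest element, counted with multiplicity, of the collection {am + bn : (m,n) ∈ ℕ × ℕ}), one has lim_{k→∞} c_k(a,b)²/k = 2ab. (This is the Weyl law for the ECH capacities of the ellipsoid E(a,b), whose k-th ECH capacity equals c_k(a,b).) -/

import Mathlib

/-- `latN a b T` is the number of lattice points `(x,y) ∈ ℕ × ℕ` with `a·x + b·y ≤ T`
(a finite set when `a, b > 0`). -/
noncomputable def latN (a b T : ℝ) : ℕ :=
  Set.ncard {p : ℕ × ℕ | a * p.1 + b * p.2 ≤ T}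

/-- `ck a b k` is the `(k+1)`-st smallest element, counted with multiplicity, of the
collection `{a·m + b·n : (m,n) ∈ ℕ × ℕ}`; these are the ECH capacities of the ellipsoid
`E(a,b)`. -/
noncomputable def ck (a b : ℝ) (k : ℕ) : ℝ :=
  sInf {T : ℝ | 0 ≤ T ∧ k + 1 ≤ latN a b T}

open Filter

lemma latN_eq (a b T : ℝ) (ha : 0 < a) (hb : 0 < b) (hT : 0 ≤ T) :
    latN a b T = ∑ x ∈ Finset.range (⌊T/a⌋₊ + 1), (⌊(T - a*x)/b⌋₊ + 1) := by
  have hset : {p : ℕ × ℕ | a * p.1 + b * p.2 ≤ T} =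
      ↑((Finset.range (⌊T/a⌋₊ + 1)).biUnion
        (fun x => {x} ×ˢ Finset.range (⌊(T - a*x)/b⌋₊ + 1))) := by
    ext p
    simp only [Set.mem_setOf_eq, Finset.coe_biUnion, Finset.mem_coe, Finset.mem_biUnion,
      Finset.mem_range, Finset.mem_product, Finset.mem_singleton, Set.mem_iUnion]
    constructor
    · intro h
      refine ⟨p.1, ?_, rfl, ?_⟩
      · have h1 : a * p.1 ≤ T := by nlinarith [Nat.cast_nonneg (α := ℝ) p.2]
        have : (p.1 : ℝ) ≤ T / a := by rw [le_div_iff₀ ha]; linarith [mul_comm a (p.1:ℝ)]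
        have := Nat.le_floor this
        omega
      · have h2 : (p.2 : ℝ) ≤ (T - a * p.1) / b := by
          rw [le_div_iff₀ hb]; nlinarith
        have := Nat.le_floor h2
        omega
    · rintro ⟨x, hx1, hx2, hy⟩
      subst hx2
      have hxle : (p.1 : ℝ) ≤ ⌊T/a⌋₊ := by exact_mod_cast Nat.lt_succ_iff.mp hx1
      have hax : a * p.1 ≤ T := by
        have := Nat.floor_le (div_nonneg hT ha.le) (R := ℝ) (a := T/a)
        have h3 : (p.1 : ℝ) ≤ T / a := le_trans hxle this
        calc a * p.1 ≤ a * (T/a) := by nlinarith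
          _ = T := by field_simp
      have hyle : (p.2 : ℝ) ≤ ⌊(T - a*p.1)/b⌋₊ := by exact_mod_cast Nat.lt_succ_iff.mp hy
      have h4 : (p.2 : ℝ) ≤ (T - a * p.1)/b :=
        le_trans hyle (Nat.floor_le (div_nonneg (by linarith) hb.le))
      rw [le_div_iff₀ hb] at h4
      nlinarith
  rw [latN, hset, Set.ncard_coe_finset]
  rw [Finset.card_biUnion]
  · apply Finset.sum_congr rfl
    intro x _
    rw [Finset.card_product, Finset.card_singleton, Finset.card_range, one_mul]
  · intro x _ y _ hxy
    simp only [Finset.disjoint_left]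
    rintro ⟨u, v⟩ hu hv
    simp only [Finset.mem_product, Finset.mem_singleton] at hu hv
    exact hxy (hu.1.symm.trans hv.1)

lemma sum_cast_bounds (a b T : ℝ) (ha : 0 < a) (hb : 0 < b) (hT : 0 ≤ T) :
    T^2 ≤ 2*a*b*(latN a b T) ∧ 2*a*b*(latN a b T) ≤ (T+a+b)^2 := by
  set X := ⌊T/a⌋₊ with hX
  have hN : (latN a b T : ℝ) = ∑ x ∈ Finset.range (X + 1), ((⌊(T - a*x)/b⌋₊ : ℝ) + 1) := by
    rw [latN_eq a b T ha hb hT]; push_cast; ring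
  -- bounds on u = a*X
  have hfl : (X : ℝ) ≤ T / a := Nat.floor_le (div_nonneg hT ha.le)
  have hfl2 : T / a < (X : ℝ) + 1 := Nat.lt_floor_add_one (T/a)
  have hu1 : a * X ≤ T := by
    have := (le_div_iff₀ ha).mp hfl; linarith
  have hu2 : T < a * X + a := by
    have := (div_lt_iff₀ ha).mp hfl2; linarith
  have huX : (0:ℝ) ≤ a * X := by positivity
  -- Gauss sum
  have hgauss : ∑ x ∈ Finset.range (X + 1), (x : ℝ) = (X+1) * X / 2 := by
    have := Finset.sum_range_id_mul_two (X + 1)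
    have : ((∑ i ∈ Finset.range (X+1), i : ℕ) : ℝ) * 2 = (X+1) * X := by
      exact_mod_cast congrArg (Nat.cast (R := ℝ)) this
    push_cast at this ⊢
    linarith
  constructor
  · -- lower bound on count
    have hterm : ∀ x ∈ Finset.range (X + 1),
        (T - a*x)/b ≤ (⌊(T - a*x)/b⌋₊ : ℝ) + 1 := fun x _ =>
      (Nat.lt_floor_add_one _).le
    have hsum : ∑ x ∈ Finset.range (X + 1), (T - a*(x:ℝ))/b ≤ (latN a b T : ℝ) := by
      rw [hN]; exact Finset.sum_le_sum hterm
    have hev : ∑ x ∈ Finset.range (X + 1), (T - a*(x:ℝ))/b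
        = ((X+1)*T - a * ((X+1)*X/2)) / b := by
      rw [← Finset.sum_div]
      congr 1
      rw [Finset.sum_sub_distrib, Finset.sum_const, Finset.card_range, ← Finset.mul_sum, hgauss]
      push_cast; ring
    rw [hev] at hsum
    rw [div_le_iff₀ hb] at hsum
    nlinarith [sq_nonneg (T - a*X)]
  · -- upper bound on count
    have hterm : ∀ x ∈ Finset.range (X + 1),
        (⌊(T - a*x)/b⌋₊ : ℝ) + 1 ≤ (T - a*x)/b + 1 := by
      intro x hx
      have hxle : (x:ℝ) ≤ X := by
        have := Finset.mem_range.mp hx; exact_mod_cast Nat.lt_succ_iff.mp this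
      have h0 : (0:ℝ) ≤ (T - a*x)/b := by
        apply div_nonneg _ hb.le
        nlinarith
      linarith [Nat.floor_le h0]
    have hsum : (latN a b T : ℝ) ≤ ∑ x ∈ Finset.range (X + 1), ((T - a*(x:ℝ))/b + 1) := by
      rw [hN]; exact Finset.sum_le_sum hterm
    have hev : ∑ x ∈ Finset.range (X + 1), ((T - a*(x:ℝ))/b + 1)
        = ((X+1)*T - a * ((X+1)*X/2)) / b + (X+1) := by
      rw [Finset.sum_add_distrib, Finset.sum_const, Finset.card_range]
      congr 1
      · rw [← Finset.sum_div, Finset.sum_sub_distrib, Finset.sum_const, Finset.card_range,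
          ← Finset.mul_sum, hgauss]
        push_cast; ring
      · push_cast; ring
    rw [hev] at hsum
    rw [show ((X+1)*T - a * ((X+1)*X/2)) / b + ((X:ℝ)+1)
        = ((X+1)*T - a * ((X+1)*X/2) + b*(X+1)) / b from by field_simp] at hsum
    rw [le_div_iff₀ hb] at hsum
    nlinarith [sq_nonneg (T + b - a*X), sq_nonneg (T - a*X)]

lemma latN_lb (a b T : ℝ) (ha : 0 < a) (hb : 0 < b) (hT : 0 ≤ T) :
    T^2 ≤ 2*a*b*(latN a b T) := (sum_cast_bounds a b T ha hb hT).1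

lemma latN_ub (a b T : ℝ) (ha : 0 < a) (hb : 0 < b) (hT : 0 ≤ T) :
    2*a*b*(latN a b T) ≤ (T+a+b)^2 := (sum_cast_bounds a b T ha hb hT).2

lemma ck_bounds (a b : ℝ) (ha : 0 < a) (hb : 0 < b) (k : ℕ) :
    Real.sqrt (2*a*b*(k+1)) - (a+b) ≤ ck a b k ∧
      ck a b k ≤ Real.sqrt (2*a*b*(k+1)) ∧ 0 ≤ ck a b k := by
  set T₀ := Real.sqrt (2*a*b*(k+1)) with hT₀
  have hT₀nn : 0 ≤ T₀ := Real.sqrt_nonneg _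
  have hT₀sq : T₀^2 = 2*a*b*(k+1) := Real.sq_sqrt (by positivity)
  have hmem : T₀ ∈ {T : ℝ | 0 ≤ T ∧ k + 1 ≤ latN a b T} := by
    refine ⟨hT₀nn, ?_⟩
    have h1 := latN_lb a b T₀ ha hb hT₀nn
    rw [hT₀sq] at h1
    have h2 : ((k:ℝ)+1) ≤ (latN a b T₀ : ℝ) := by
      have hab : 0 < 2*a*b := by positivity
      exact le_of_mul_le_mul_left (by linarith [h1]) hab
    exact_mod_cast h2
  have hbdd : BddBelow {T : ℝ | 0 ≤ T ∧ k + 1 ≤ latN a b T} := ⟨0, fun T hT => hT.1⟩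
  refine ⟨?_, csInf_le hbdd hmem, le_csInf ⟨T₀, hmem⟩ (fun T hT => hT.1)⟩
  apply le_csInf ⟨T₀, hmem⟩
  rintro T ⟨hT0, hTk⟩
  have h1 : 2*a*b*((k:ℝ)+1) ≤ 2*a*b*(latN a b T) := by
    have : ((k:ℝ)+1) ≤ (latN a b T : ℝ) := by exact_mod_cast hTk
    nlinarith
  have h2 := le_trans h1 (latN_ub a b T ha hb hT0)
  have h3 : T₀ ≤ T + a + b := by
    have := Real.sqrt_le_sqrt h2
    rw [Real.sqrt_sq (by linarith)] at this
    exact hT₀ ▸ this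
  linarith


/-- The Weyl law for the ECH capacities of the ellipsoid `E(a,b)`:
`lim_{k→∞} c_k(a,b)²/k = 2ab`. -/
theorem ellipsoid_capacities_weyl_law (a b : ℝ) (ha : 0 < a) (hb : 0 < b) :
    Filter.Tendsto (fun k : ℕ => (ck a b k) ^ 2 / (k : ℝ))
      Filter.atTop (nhds (2 * a * b)) := by
  have hkey : (fun k : ℕ => (ck a b k) ^ 2 / (k : ℝ))
      = fun k : ℕ => (ck a b k / Real.sqrt k) ^ 2 := by
    funext k
    rw [div_pow, Real.sq_sqrt (Nat.cast_nonneg k)]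
  rw [hkey]
  have h2ab : (2*a*b : ℝ) = (Real.sqrt (2*a*b))^2 := (Real.sq_sqrt (by positivity)).symm
  rw [show (2*a*b : ℝ) = 2*a*b from rfl]
  have hmain : Tendsto (fun k : ℕ => ck a b k / Real.sqrt k) atTop (nhds (Real.sqrt (2*a*b))) := by
    -- upper comparison function
    have hUlim : Tendsto (fun k : ℕ => Real.sqrt (2*a*b*((k:ℝ)+1)) / Real.sqrt k) atTop
        (nhds (Real.sqrt (2*a*b))) := by
      have heq : (fun k : ℕ => Real.sqrt (2*a*b*((k:ℝ)+1)) / Real.sqrt k)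
          = fun k : ℕ => Real.sqrt (2*a*b*((k:ℝ)+1) / k) := by
        funext k; rw [Real.sqrt_div (by positivity)]
      rw [heq]
      have hin : Tendsto (fun k : ℕ => 2*a*b*((k:ℝ)+1) / k) atTop (nhds (2*a*b)) := by
        have h1 : Tendsto (fun k : ℕ => 2*a*b + 2*a*b*(1/(k:ℝ))) atTop (nhds (2*a*b)) := by
          have := (tendsto_one_div_atTop_nhds_zero_nat).const_mul (2*a*b)
          simpa using this.const_add (2*a*b)
        apply h1.congr'
        filter_upwards [Filter.eventually_ge_atTop 1] with k hk
        have hk0 : (k:ℝ) ≠ 0 := by positivity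
        field_simp
      exact (Real.continuous_sqrt.tendsto _).comp hin
    have hsqrtTop : Tendsto (fun k : ℕ => Real.sqrt k) atTop atTop := by
      rw [Filter.tendsto_atTop_atTop]
      intro C
      refine ⟨⌈(max C 0)^2⌉₊, fun k hk => ?_⟩
      have h1 : (max C 0)^2 ≤ (k:ℝ) := le_trans (Nat.le_ceil _) (by exact_mod_cast hk)
      have h2 := Real.sqrt_le_sqrt h1
      rw [Real.sqrt_sq (le_max_right _ _)] at h2
      exact le_trans (le_max_left _ _) h2
    have hClim : Tendsto (fun k : ℕ => (a+b) / Real.sqrt k) atTop (nhds 0) :=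
      Filter.Tendsto.div_atTop tendsto_const_nhds hsqrtTop
    have hLlim : Tendsto (fun k : ℕ =>
        Real.sqrt (2*a*b*((k:ℝ)+1)) / Real.sqrt k - (a+b) / Real.sqrt k) atTop
        (nhds (Real.sqrt (2*a*b))) := by
      have := hUlim.sub hClim
      simpa using this
    apply tendsto_of_tendsto_of_tendsto_of_le_of_le' hLlim hUlim
    · filter_upwards [Filter.eventually_ge_atTop 1] with k hk
      have hspos : 0 < Real.sqrt k := Real.sqrt_pos.mpr (by exact_mod_cast hk)
      rw [← sub_div]
      gcongr
      exact (ck_bounds a b ha hb k).1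
    · filter_upwards [Filter.eventually_ge_atTop 1] with k hk
      have hspos : 0 < Real.sqrt k := Real.sqrt_pos.mpr (by exact_mod_cast hk)
      gcongr
      exact (ck_bounds a b ha hb k).2.1
  have := hmain.pow 2
  rwa [← h2ab] at this
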